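/- Let 0 < q < 1, let t > 0 be a real number, and let k, ν be natural numbers with 1 ≤ k ≤ ν. Define F(y) = Σ_{r=k}^{ν} q^{-r(ν-r)} [ν choose r]_q (y/t)^r ∏_{i=1}^{ν-r} (1 − y/(q^{i-1} t)). Then for every real y ≠ 0, the q-derivative (F(y) − F(qy))/((1−q)y) equals q^{-k(ν-k)} · ([ν]_q! / ([k−1]_q! [ν−k]_q!)) · (y^{k-1}/t^k) · ∏_{i=1}^{ν-k} (1 − y/(q^{i-1} t)). -/

import Mathlib

/-- The `q`-number `[m]_q = (1 - q^m)/(1 - q)`. -/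
noncomputable def qnum (q : ℝ) (m : ℕ) : ℝ := (1 - q ^ m) / (1 - q)

/-- The `q`-factorial `[n]_q! = [1]_q [2]_q ⋯ [n]_q`. -/
noncomputable def qfact (q : ℝ) (n : ℕ) : ℝ := ∏ i ∈ Finset.range n, qnum q (i + 1)

/-- The `q`-binomial coefficient `[n choose k]_q = [n]_q! / ([k]_q! [n-k]_q!)`. -/
noncomputable def qbinom (q : ℝ) (n k : ℕ) : ℝ := qfact q n / (qfact q k * qfact q (n - k))

lemma qnum_pos {q : ℝ} (hq0 : 0 < q) (hq1 : q < 1) (m : ℕ) : 0 < qnum q (m + 1) := by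
  have h : q ^ (m + 1) < 1 := pow_lt_one₀ hq0.le hq1 (Nat.succ_ne_zero m)
  exact div_pos (by linarith) (by linarith)

lemma qfact_pos {q : ℝ} (hq0 : 0 < q) (hq1 : q < 1) (n : ℕ) : 0 < qfact q n :=
  Finset.prod_pos fun i _ => qnum_pos hq0 hq1 i

lemma qfact_succ (q : ℝ) (n : ℕ) : qfact q (n + 1) = qfact q n * qnum q (n + 1) :=
  Finset.prod_range_succ _ _

/-- Main per-term identity for `r = s+1 < ν = s+m+2`. -/
lemma key1 (q t y : ℝ) (hq0 : 0 < q) (hq1 : q < 1) (ht : 0 < t) (s m : ℕ) :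
    q ^ (-(((s : ℤ) + 1) * ((m : ℤ) + 1))) * qbinom q (s + m + 2) (s + 1) *
        ((y / t) ^ (s + 1) * ∏ i ∈ Finset.range (m + 1), (1 - y / (q ^ i * t))
          - (q * y / t) ^ (s + 1) * ∏ i ∈ Finset.range (m + 1), (1 - q * y / (q ^ i * t)))
      = (1 - q) * y *
        (q ^ (-(((s : ℤ) + 1) * ((m : ℤ) + 1)))
            * (qfact q (s + m + 2) / (qfact q s * qfact q (m + 1)))
            * (y ^ s / t ^ (s + 1)) * ∏ i ∈ Finset.range (m + 1), (1 - y / (q ^ i * t))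
          - q ^ (-(((s : ℤ) + 2) * (m : ℤ)))
            * (qfact q (s + m + 2) / (qfact q (s + 1) * qfact q m))
            * (y ^ (s + 1) / t ^ (s + 2)) * ∏ i ∈ Finset.range m, (1 - y / (q ^ i * t))) := by
  have hqne : q ≠ 0 := hq0.ne'
  have htne : t ≠ 0 := ht.ne'
  have h1q : (1 : ℝ) - q ≠ 0 := by intro h; nlinarith
  have hP : ∏ i ∈ Finset.range (m + 1), (1 - q * y / (q ^ i * t))
      = (1 - q * y / t) * ∏ i ∈ Finset.range m, (1 - y / (q ^ i * t)) := by
    rw [Finset.prod_range_succ']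
    simp only [pow_zero, one_mul]
    rw [mul_comm]
    congr 1
    refine Finset.prod_congr rfl fun i _ => ?_
    congr 1
    rw [pow_succ]
    field_simp
  rw [hP, Finset.prod_range_succ]
  have hz1 : q ^ (-(((s : ℤ) + 1) * ((m : ℤ) + 1))) = (q ^ ((s + 1) * (m + 1)))⁻¹ := by
    rw [show (-(((s : ℤ) + 1) * ((m : ℤ) + 1))) = -(((s + 1) * (m + 1) : ℕ) : ℤ) by
      push_cast; ring, zpow_neg, zpow_natCast]
  have hz2 : q ^ (-(((s : ℤ) + 2) * (m : ℤ))) = (q ^ ((s + 2) * m))⁻¹ := by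
    rw [show (-(((s : ℤ) + 2) * (m : ℤ))) = -(((s + 2) * m : ℕ) : ℤ) by
      push_cast; ring, zpow_neg, zpow_natCast]
  rw [hz1, hz2, qbinom, show s + m + 2 - (s + 1) = m + 1 by omega,
    qfact_succ q s, qfact_succ q m, qnum, qnum]
  have hFs : qfact q s ≠ 0 := (qfact_pos hq0 hq1 s).ne'
  have hFm : qfact q m ≠ 0 := (qfact_pos hq0 hq1 m).ne'
  have hNs : (1 : ℝ) - q ^ (s + 1) ≠ 0 := by
    have : q ^ (s + 1) < 1 := pow_lt_one₀ hq0.le hq1 (by omega); intro h; nlinarith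
  have hNm : (1 : ℝ) - q ^ (m + 1) ≠ 0 := by
    have : q ^ (m + 1) < 1 := pow_lt_one₀ hq0.le hq1 (by omega); intro h; nlinarith
  set P := ∏ i ∈ Finset.range m, (1 - y / (q ^ i * t))
  rw [div_pow, div_pow, mul_pow]
  field_simp
  ring

/-- Boundary per-term identity for `r = ν = n+1`. -/
lemma key2 (q t y : ℝ) (hq0 : 0 < q) (hq1 : q < 1) (ht : 0 < t) (n : ℕ) :
    qbinom q (n + 1) (n + 1) * ((y / t) ^ (n + 1) - (q * y / t) ^ (n + 1))
      = (1 - q) * y * ((qfact q (n + 1) / (qfact q n * qfact q 0)) * (y ^ n / t ^ (n + 1))) := by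
  have htne : t ≠ 0 := ht.ne'
  have h1q : (1 : ℝ) - q ≠ 0 := by intro h; nlinarith
  have hFn : qfact q n ≠ 0 := (qfact_pos hq0 hq1 n).ne'
  have hN : (1 : ℝ) - q ^ (n + 1) ≠ 0 := by
    have : q ^ (n + 1) < 1 := pow_lt_one₀ hq0.le hq1 (by omega); intro h; nlinarith
  rw [qbinom, Nat.sub_self]
  rw [show qfact q 0 = 1 from Finset.prod_range_zero _]
  rw [qfact_succ q n, qnum]
  rw [div_pow, div_pow, mul_pow]
  field_simp
  ring

/-- The `q`-derivative of the `q`-distribution function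
`F(y) = Σ_{r=k}^{ν} q^{-r(ν-r)} [ν choose r]_q (y/t)^r ∏_{i=1}^{ν-r} (1 − y/(q^{i-1} t))`
of the `k`-th `q`-order statistic equals the `q`-density
`q^{-k(ν-k)} ([ν]_q!/([k−1]_q![ν−k]_q!)) (y^{k-1}/t^k) ∏_{i=1}^{ν-k} (1 − y/(q^{i-1} t))`. -/
theorem stmt12 (q t : ℝ) (hq0 : 0 < q) (hq1 : q < 1) (ht : 0 < t) (k ν : ℕ)
    (hk : 1 ≤ k) (hkν : k ≤ ν)
    (F : ℝ → ℝ)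
    (hF : ∀ y : ℝ, F y = ∑ r ∈ Finset.Icc k ν,
        q ^ (-((r : ℤ) * ((ν : ℤ) - (r : ℤ)))) * qbinom q ν r * (y / t) ^ r
          * ∏ i ∈ Finset.range (ν - r), (1 - y / (q ^ i * t)))
    (y : ℝ) (hy : y ≠ 0) :
    (F y - F (q * y)) / ((1 - q) * y)
      = q ^ (-((k : ℤ) * ((ν : ℤ) - (k : ℤ))))
          * (qfact q ν / (qfact q (k - 1) * qfact q (ν - k)))
          * (y ^ (k - 1) / t ^ k)
          * ∏ i ∈ Finset.range (ν - k), (1 - y / (q ^ i * t)) := by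
  have hqne : q ≠ 0 := hq0.ne'
  have h1q : (1 : ℝ) - q ≠ 0 := by intro h; nlinarith
  set D : ℕ → ℝ := fun r =>
    q ^ (-((r : ℤ) * ((ν : ℤ) - (r : ℤ))))
      * (qfact q ν / (qfact q (r - 1) * qfact q (ν - r)))
      * (y ^ (r - 1) / t ^ r)
      * ∏ i ∈ Finset.range (ν - r), (1 - y / (q ^ i * t)) with hD
  set f : ℕ → ℝ := fun r => if r ≤ ν then D r else 0 with hf
  have hsum : F y - F (q * y) = (1 - q) * y * D k := by
    rw [hF y, hF (q * y), ← Finset.sum_sub_distrib]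
    have hterm : ∀ r ∈ Finset.Icc k ν,
        (q ^ (-((r : ℤ) * ((ν : ℤ) - (r : ℤ)))) * qbinom q ν r * (y / t) ^ r
            * ∏ i ∈ Finset.range (ν - r), (1 - y / (q ^ i * t)))
          - (q ^ (-((r : ℤ) * ((ν : ℤ) - (r : ℤ)))) * qbinom q ν r * (q * y / t) ^ r
            * ∏ i ∈ Finset.range (ν - r), (1 - q * y / (q ^ i * t)))
          = (1 - q) * y * (f r - f (r + 1)) := by
      intro r hr
      rw [Finset.mem_Icc] at hr
      obtain ⟨hr1, hr2⟩ := hr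
      rcases eq_or_lt_of_le hr2 with hre | hrlt
      · -- r = ν
        subst hre
        obtain ⟨n, rfl⟩ : ∃ n, r = n + 1 := ⟨r - 1, by omega⟩
        have hfr : f (n + 1) = D (n + 1) := if_pos le_rfl
        have hfr1 : f (n + 1 + 1) = 0 := if_neg (by omega)
        rw [hfr, hfr1, sub_zero, hD]
        simp only [Nat.sub_self, Finset.range_zero, Finset.prod_empty, mul_one,
          Nat.add_sub_cancel]
        rw [show (-(((n + 1 : ℕ) : ℤ) * (((n + 1 : ℕ) : ℤ) - ((n + 1 : ℕ) : ℤ)))) = 0 by ring,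
          zpow_zero]
        have := key2 q t y hq0 hq1 ht n
        rw [show qfact q 0 = 1 from Finset.prod_range_zero _] at this
        calc 1 * qbinom q (n + 1) (n + 1) * (y / t) ^ (n + 1)
              - 1 * qbinom q (n + 1) (n + 1) * (q * y / t) ^ (n + 1)
            = qbinom q (n + 1) (n + 1) * ((y / t) ^ (n + 1) - (q * y / t) ^ (n + 1)) := by ring
          _ = (1 - q) * y * ((qfact q (n + 1) / (qfact q n * qfact q 0)) * (y ^ n / t ^ (n + 1))) :=
              key2 q t y hq0 hq1 ht n
          _ = (1 - q) * y * (1 * (qfact q (n + 1) / (qfact q n * 1)) * (y ^ n / t ^ (n + 1))) := by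
              rw [show qfact q 0 = 1 from Finset.prod_range_zero _]; ring
      · -- r < ν
        obtain ⟨s, rfl⟩ : ∃ s, r = s + 1 := ⟨r - 1, by omega⟩
        obtain ⟨m, rfl⟩ : ∃ m, ν = s + m + 2 := ⟨ν - s - 2, by omega⟩
        have hfr : f (s + 1) = D (s + 1) := if_pos (by omega)
        have hfr1 : f (s + 1 + 1) = D (s + 2) := if_pos (by omega)
        rw [hfr, hfr1, hD]
        have e1 : s + m + 2 - (s + 1) = m + 1 := by omega
        have e2 : s + m + 2 - (s + 2) = m := by omega
        have c1 : (-(((s + 1 : ℕ) : ℤ) * (((s + m + 2 : ℕ) : ℤ) - ((s + 1 : ℕ) : ℤ))))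
            = -(((s : ℤ) + 1) * ((m : ℤ) + 1)) := by push_cast; ring
        have c2 : (-(((s + 2 : ℕ) : ℤ) * (((s + m + 2 : ℕ) : ℤ) - ((s + 2 : ℕ) : ℤ))))
            = -(((s : ℤ) + 2) * (m : ℤ)) := by push_cast; ring
        simp only [e1, e2, c1, c2, Nat.add_sub_cancel, show s + 1 - 1 = s from rfl,
          show s + 2 - 1 = s + 1 from rfl]
        have := key1 q t y hq0 hq1 ht s m
        calc q ^ (-(((s : ℤ) + 1) * ((m : ℤ) + 1))) * qbinom q (s + m + 2) (s + 1)
                * (y / t) ^ (s + 1) * ∏ i ∈ Finset.range (m + 1), (1 - y / (q ^ i * t))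
              - q ^ (-(((s : ℤ) + 1) * ((m : ℤ) + 1))) * qbinom q (s + m + 2) (s + 1)
                * (q * y / t) ^ (s + 1) * ∏ i ∈ Finset.range (m + 1), (1 - q * y / (q ^ i * t))
            = q ^ (-(((s : ℤ) + 1) * ((m : ℤ) + 1))) * qbinom q (s + m + 2) (s + 1) *
                ((y / t) ^ (s + 1) * ∏ i ∈ Finset.range (m + 1), (1 - y / (q ^ i * t))
                  - (q * y / t) ^ (s + 1)
                    * ∏ i ∈ Finset.range (m + 1), (1 - q * y / (q ^ i * t))) := by ring
          _ = _ := by rw [this]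
    rw [Finset.sum_congr rfl hterm, ← Finset.mul_sum]
    congr 1
    have : ∑ r ∈ Finset.Icc k ν, (f r - f (r + 1)) = f k - f (ν + 1) := by
      rw [show Finset.Icc k ν = Finset.Ico k (ν + 1) by rw [Finset.Ico_add_one_right_eq_Icc],
        Finset.sum_Ico_eq_sum_range]
      rw [show ν + 1 - k = (ν + 1 - k : ℕ) from rfl]
      have := Finset.sum_range_sub' (fun i => f (k + i)) (ν + 1 - k)
      simp only [add_zero] at this
      rw [Finset.sum_congr rfl (fun i _ => by rw [show k + i + 1 = k + (i + 1) by ring]), this,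
        show k + (ν + 1 - k) = ν + 1 by omega]
    rw [this, show f (ν + 1) = 0 from if_neg (by omega), sub_zero,
      show f k = D k from if_pos hkν]
  rw [hsum, mul_div_cancel_left₀ _ (mul_ne_zero h1q hy)]
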